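/- arXiv:2405.04668 — 2 statements merged into one kernel-verified Lean document; each statement's English description precedes it below -/
import Mathlib

section
/- Let A be a real symmetric m×m matrix with spectral decomposition defining A⁺ = (A + |A|)/2 and A⁻ = (A - |A|)/2, where |A| has the absolute values of the eigenvalues of A. For vectors U, g ∈ ℝᵐ, the left-boundary term BTL = Uᵀ(A⁺g + A⁻U - (1/2)AU) satisfies BTL = (1/2)gᵀA⁺g - (1/2)|√(A⁺)(g-U)|² - (1/2)Uᵀ|A⁻|U, and in particular BTL ≤ (1/2)gᵀA⁺g. -/
open Matrix

open scoped ComplexOrder in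
/-- The positive semidefinite square root of a positive semidefinite matrix
(the definition `Matrix.PosSemidef.sqrt` of Mathlib, December 2024, since removed). -/
noncomputable def Matrix.PosSemidef.sqrt {n 𝕜 : Type*} [Fintype n] [DecidableEq n] [RCLike 𝕜]
    {A : Matrix n n 𝕜} (hA : A.PosSemidef) : Matrix n n 𝕜 :=
  hA.1.eigenvectorUnitary.1 * diagonal ((↑) ∘ (√·) ∘ hA.1.eigenvalues) *
  (star hA.1.eigenvectorUnitary : Matrix n n 𝕜)

lemma Matrix.PosSemidef.posSemidef_sqrt {m : ℕ} {A : Matrix (Fin m) (Fin m) ℝ}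
    (hA : A.PosSemidef) : hA.sqrt.PosSemidef := by
  unfold Matrix.PosSemidef.sqrt
  have hD : (diagonal ((RCLike.ofReal : ℝ → ℝ) ∘ (√·) ∘ hA.1.eigenvalues)).PosSemidef := by
    rw [posSemidef_diagonal_iff]
    intro i
    simp [Real.sqrt_nonneg]
  have := hD.mul_mul_conjTranspose_same (hA.1.eigenvectorUnitary : Matrix (Fin m) (Fin m) ℝ)
  simpa [Unitary.coe_star, Matrix.star_eq_conjTranspose] using this

lemma Matrix.PosSemidef.sqrt_mul_self {m : ℕ} {A : Matrix (Fin m) (Fin m) ℝ}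
    (hA : A.PosSemidef) : hA.sqrt * hA.sqrt = A := by
  unfold Matrix.PosSemidef.sqrt
  set V : Matrix (Fin m) (Fin m) ℝ := hA.1.eigenvectorUnitary.1
  have hV : (star hA.1.eigenvectorUnitary : Matrix (Fin m) (Fin m) ℝ) * V = 1 :=
    Unitary.coe_star_mul_self _
  have hdiag : diagonal ((RCLike.ofReal : ℝ → ℝ) ∘ (√·) ∘ hA.1.eigenvalues) *
      diagonal ((RCLike.ofReal : ℝ → ℝ) ∘ (√·) ∘ hA.1.eigenvalues)
      = diagonal (RCLike.ofReal ∘ hA.1.eigenvalues) := by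
    rw [diagonal_mul_diagonal]
    congr 1
    funext i
    simp [Real.mul_self_sqrt (hA.eigenvalues_nonneg i)]
  calc _ = V * (diagonal ((RCLike.ofReal : ℝ → ℝ) ∘ (√·) ∘ hA.1.eigenvalues) *
        ((star hA.1.eigenvectorUnitary : Matrix (Fin m) (Fin m) ℝ) * V) *
        diagonal ((RCLike.ofReal : ℝ → ℝ) ∘ (√·) ∘ hA.1.eigenvalues)) *
        (star hA.1.eigenvectorUnitary : Matrix (Fin m) (Fin m) ℝ) := by
          simp only [Matrix.mul_assoc, V]
    _ = A := by
      rw [hV, Matrix.mul_one, hdiag]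
      conv_rhs => rw [hA.1.spectral_theorem]
      simp [V, Unitary.conjStarAlgAut_apply]

private lemma symm_dot' {m : ℕ} {S : Matrix (Fin m) (Fin m) ℝ} (hS : S.IsSymm) (x y : Fin m → ℝ) :
    x ⬝ᵥ S.mulVec y = y ⬝ᵥ S.mulVec x := by
  rw [Matrix.dotProduct_mulVec, ← Matrix.mulVec_transpose, hS.eq, dotProduct_comm]

private lemma sq_dot' {m : ℕ} {S : Matrix (Fin m) (Fin m) ℝ} (hS : S.IsSymm) (x : Fin m → ℝ) :
    S.mulVec x ⬝ᵥ S.mulVec x = x ⬝ᵥ (S * S).mulVec x := by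
  rw [← Matrix.mulVec_mulVec, symm_dot' hS x (S.mulVec x), symm_dot' hS (S.mulVec x) x]

private lemma psd_symm {m : ℕ} {S : Matrix (Fin m) (Fin m) ℝ} (h : S.PosSemidef) : S.IsSymm := by
  have := h.isHermitian
  rwa [Matrix.IsHermitian, Matrix.conjTranspose_eq_transpose_of_trivial] at this

private lemma psd_nonneg {m : ℕ} {S : Matrix (Fin m) (Fin m) ℝ} (h : S.PosSemidef) (x : Fin m → ℝ) :
    0 ≤ x ⬝ᵥ S.mulVec x := by
  simpa using h.dotProduct_mulVec_nonneg x

/-- Left boundary term for a symmetric system with upwind flux: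
`BTL = Uᵀ(A⁺g + A⁻U - (1/2)AU) = (1/2)gᵀA⁺g - (1/2)|√(A⁺)(g-U)|² - (1/2)Uᵀ|A⁻|U`,
in particular `BTL ≤ (1/2)gᵀA⁺g`.  Here `A⁺ = (A+|A|)/2`, `A⁻ = (A-|A|)/2`, with
`|A|` the positive semidefinite absolute value of `A` (`|A|² = A²`). -/
theorem left_boundary_term_bound {m : ℕ} (A Aabs : Matrix (Fin m) (Fin m) ℝ)
    (hA : A.IsSymm) (hAabsPSD : Aabs.PosSemidef) (hsq : Aabs * Aabs = A * A)
    (hAplus : (((1 : ℝ) / 2) • (A + Aabs)).PosSemidef)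
    (hAminusAbs : (((1 : ℝ) / 2) • (Aabs - A)).PosSemidef)
    (U g : Fin m → ℝ) :
    U ⬝ᵥ ((((1 : ℝ) / 2) • (A + Aabs)).mulVec g
          + (((1 : ℝ) / 2) • (A - Aabs)).mulVec U
          - ((1 : ℝ) / 2) • A.mulVec U)
      = (1 / 2) * (g ⬝ᵥ (((1 : ℝ) / 2) • (A + Aabs)).mulVec g)
        - (1 / 2) * ((hAplus.sqrt.mulVec (g - U)) ⬝ᵥ (hAplus.sqrt.mulVec (g - U)))
        - (1 / 2) * (U ⬝ᵥ (((1 : ℝ) / 2) • (Aabs - A)).mulVec U) ∧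
    U ⬝ᵥ ((((1 : ℝ) / 2) • (A + Aabs)).mulVec g
          + (((1 : ℝ) / 2) • (A - Aabs)).mulVec U
          - ((1 : ℝ) / 2) • A.mulVec U)
      ≤ (1 / 2) * (g ⬝ᵥ (((1 : ℝ) / 2) • (A + Aabs)).mulVec g) := by
  have hAabsSymm : Aabs.IsSymm := psd_symm hAabsPSD
  have hSsymm : hAplus.sqrt.IsSymm := psd_symm hAplus.posSemidef_sqrt
  have hnorm : hAplus.sqrt.mulVec (g - U) ⬝ᵥ hAplus.sqrt.mulVec (g - U)
      = (g - U) ⬝ᵥ ((((1 : ℝ) / 2) • (A + Aabs)).mulVec (g - U)) := by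
    rw [sq_dot' hSsymm, hAplus.sqrt_mul_self]
  have heq : U ⬝ᵥ ((((1 : ℝ) / 2) • (A + Aabs)).mulVec g
          + (((1 : ℝ) / 2) • (A - Aabs)).mulVec U
          - ((1 : ℝ) / 2) • A.mulVec U)
      = (1 / 2) * (g ⬝ᵥ (((1 : ℝ) / 2) • (A + Aabs)).mulVec g)
        - (1 / 2) * ((hAplus.sqrt.mulVec (g - U)) ⬝ᵥ (hAplus.sqrt.mulVec (g - U)))
        - (1 / 2) * (U ⬝ᵥ (((1 : ℝ) / 2) • (Aabs - A)).mulVec U) := by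
    rw [hnorm]
    simp only [Matrix.smul_mulVec, Matrix.add_mulVec, Matrix.sub_mulVec,
      Matrix.mulVec_sub, dotProduct_add, dotProduct_sub, sub_dotProduct,
      dotProduct_smul, smul_add, smul_sub, smul_eq_mul]
    rw [symm_dot' hA g U, symm_dot' hAabsSymm g U]
    ring
  refine ⟨heq, ?_⟩
  rw [heq]
  have h1 : 0 ≤ hAplus.sqrt.mulVec (g - U) ⬝ᵥ hAplus.sqrt.mulVec (g - U) :=
    Finset.sum_nonneg fun i _ => mul_self_nonneg _
  have h2 : 0 ≤ U ⬝ᵥ (((1 : ℝ) / 2) • (Aabs - A)).mulVec U := psd_nonneg hAminusAbs U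
  linarith
end

section
/- Let A = Aᵀ be a real m×m matrix with A⁺ = (A+|A|)/2 and |A⁻| = (|A|-A)/2. Then for every x ∈ ℝᵐ, xᵀA⁺x ≤ ρ(A)|x|² and xᵀ|A⁻|x ≤ ρ(A)|x|², where ρ(A) is the spectral radius of A. -/
open Matrix Finset

/-- For real symmetric `A` with `A⁺ = (A+|A|)/2` and `|A⁻| = (|A|-A)/2`, the
quadratic forms are bounded by the spectral radius:
`xᵀA⁺x ≤ ρ(A)|x|²` and `xᵀ|A⁻|x ≤ ρ(A)|x|²`. -/
theorem psd_parts_bounded_by_spectral_radius {m : ℕ}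
    (A Aabs : Matrix (Fin m) (Fin m) ℝ)
    (hA : A.IsHermitian) (hAabsPSD : Aabs.PosSemidef) (hsq : Aabs * Aabs = A * A)
    (x : Fin m → ℝ) :
    x ⬝ᵥ (((1 : ℝ) / 2) • (A + Aabs)).mulVec x
        ≤ (⨆ i, |hA.eigenvalues i|) * (x ⬝ᵥ x) ∧
    x ⬝ᵥ (((1 : ℝ) / 2) • (Aabs - A)).mulVec x
        ≤ (⨆ i, |hA.eigenvalues i|) * (x ⬝ᵥ x) := by
  set ρ := ⨆ i, |hA.eigenvalues i| with hρdef
  set U : Matrix (Fin m) (Fin m) ℝ := (hA.eigenvectorUnitary : Matrix (Fin m) (Fin m) ℝ) with hU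
  set d : Fin m → ℝ := hA.eigenvalues with hd
  set y : Fin m → ℝ := star U *ᵥ x with hy
  have hUU : star U * U = 1 := (hA.eigenvectorUnitary).2.1
  have hUU' : U * star U = 1 := (hA.eigenvectorUnitary).2.2
  have hspec : A = U * diagonal d * star U := by
    simpa using hA.spectral_theorem
  have hdotU : ∀ z : Fin m → ℝ, x ⬝ᵥ (U *ᵥ z) = y ⬝ᵥ z := by
    intro z
    rw [hy, dotProduct_mulVec, star_eq_conjTranspose,
      conjTranspose_eq_transpose_of_trivial, mulVec_transpose]
  have hxx : x ⬝ᵥ x = ∑ i, y i ^ 2 := by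
    have h1 : y ⬝ᵥ y = x ⬝ᵥ x := by
      rw [← hdotU y, hy, mulVec_mulVec, hUU', one_mulVec]
    rw [← h1]; simp [dotProduct, sq]
  have hdiag : ∀ e : Fin m → ℝ, x ⬝ᵥ (U * diagonal e * star U) *ᵥ x
      = ∑ i, e i * y i ^ 2 := by
    intro e
    rw [← mulVec_mulVec, ← mulVec_mulVec, hdotU, ← hy, dotProduct_mulVec]
    simp [vecMul_diagonal, dotProduct, sq]
    exact Finset.sum_congr rfl fun i _ => by ring
  have hAx : x ⬝ᵥ A *ᵥ x = ∑ i, d i * y i ^ 2 := by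
    rw [hspec] at *; exact hdiag d
  have hA2 : A * A = U * diagonal (fun i => d i ^ 2) * star U := by
    rw [hspec]
    have h : U * diagonal d * star U * (U * diagonal d * star U)
        = U * (diagonal d * ((star U * U) * diagonal d)) * star U := by
      simp only [mul_assoc]
    rw [h, hUU, one_mul, diagonal_mul_diagonal]
    congr 2
    ext i; ring
  have hA2x : x ⬝ᵥ (A * A) *ᵥ x = ∑ i, d i ^ 2 * y i ^ 2 := by
    rw [hA2]; exact hdiag _
  -- bounds
  have hbdd : BddAbove (Set.range fun i => |d i|) := Set.Finite.bddAbove (Set.finite_range _)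
  have hρ : ∀ i, |d i| ≤ ρ := fun i => le_ciSup hbdd i
  have hρ0 : 0 ≤ ρ := by
    rcases Nat.eq_zero_or_pos m with h | h
    · subst h
      simp [hρdef, Real.iSup_of_isEmpty]
    · exact le_trans (abs_nonneg _) (hρ ⟨0, h⟩)
  have hy2 : ∀ i, (0:ℝ) ≤ y i ^ 2 := fun i => sq_nonneg _
  have hsum : (0:ℝ) ≤ ∑ i, y i ^ 2 := Finset.sum_nonneg fun i _ => hy2 i
  have L1 : |x ⬝ᵥ A *ᵥ x| ≤ ρ * (x ⬝ᵥ x) := by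
    rw [hAx, hxx, Finset.mul_sum]
    refine le_trans (Finset.abs_sum_le_sum_abs _ _) (Finset.sum_le_sum fun i _ => ?_)
    rw [abs_mul, abs_of_nonneg (hy2 i)]
    exact mul_le_mul_of_nonneg_right (hρ i) (hy2 i)
  have L2 : x ⬝ᵥ (A * A) *ᵥ x ≤ ρ ^ 2 * (x ⬝ᵥ x) := by
    rw [hA2x, hxx, Finset.mul_sum]
    refine Finset.sum_le_sum fun i _ => mul_le_mul_of_nonneg_right ?_ (hy2 i)
    calc d i ^ 2 = |d i| ^ 2 := (sq_abs _).symm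
    _ ≤ ρ ^ 2 := pow_le_pow_left₀ (abs_nonneg _) (hρ i) 2
  -- bound for Aabs
  have L3 : x ⬝ᵥ Aabs *ᵥ x ≤ ρ * (x ⬝ᵥ x) := by
    set w : Fin m → ℝ := Aabs *ᵥ x with hw
    have hCS : (x ⬝ᵥ w) ^ 2 ≤ (x ⬝ᵥ x) * (w ⬝ᵥ w) := by
      simpa [dotProduct, sq] using
        Finset.sum_mul_sq_le_sq_mul_sq Finset.univ x w
    have hsymm : Aabsᵀ = Aabs := by
      rw [← conjTranspose_eq_transpose_of_trivial]
      exact hAabsPSD.1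
    have hww : w ⬝ᵥ w = x ⬝ᵥ (A * A) *ᵥ x := by
      rw [← hsq, ← mulVec_mulVec, dotProduct_mulVec, ← mulVec_transpose, hsymm, ← hw]
      exact dotProduct_comm _ _
    have h2 : (x ⬝ᵥ w) ^ 2 ≤ (ρ * (x ⬝ᵥ x)) ^ 2 := by
      calc (x ⬝ᵥ w) ^ 2 ≤ (x ⬝ᵥ x) * (w ⬝ᵥ w) := hCS
      _ ≤ (x ⬝ᵥ x) * (ρ ^ 2 * (x ⬝ᵥ x)) := by
          apply mul_le_mul_of_nonneg_left (hww ▸ L2) (by rw [hxx]; exact hsum)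
      _ = (ρ * (x ⬝ᵥ x)) ^ 2 := by ring
    have hnn : 0 ≤ ρ * (x ⬝ᵥ x) := mul_nonneg hρ0 (by rw [hxx]; exact hsum)
    nlinarith [hAabsPSD.dotProduct_mulVec_nonneg x, h2, hnn]
  have hAb := hAabsPSD.dotProduct_mulVec_nonneg x
  -- main goals
  constructor
  · rw [smul_mulVec, add_mulVec, dotProduct_smul, dotProduct_add]
    have := abs_le.mp L1
    simp only [smul_eq_mul]
    linarith [L3, this.2]
  · rw [smul_mulVec, sub_mulVec, dotProduct_smul, dotProduct_sub]
    have := abs_le.mp L1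
    simp only [smul_eq_mul]
    linarith [L3, this.1]
end
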